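/- With γ = 4/5, θ₊ = 3π/4, θ₋ = -π/4, the constant a₀ = (sin(γθ₊) cos(γθ₋)) / (cos(γθ₊) sin(γθ₋)) is a positive real number. Consequently, the piecewise-defined function u(r,θ) = r^{4/5}(A sin((4/5)θ) + cos((4/5)θ)) for 0 ≤ θ ≤ 3π/4 and r^{4/5}(a₀ A sin((4/5)θ) + cos((4/5)θ)) for -π/4 ≤ θ ≤ 0, with A = -cos((4/5)·3π/4)/sin((4/5)·3π/4), vanishes on both rays {θ = 3π/4} and {θ = -π/4}. -/

import Mathlib

/-- with γ = 4/5, θ₊ = 3π/4, θ₋ = -π/4,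
a₀ = (sin(γθ₊)cos(γθ₋))/(cos(γθ₊)sin(γθ₋)) > 0, and the piecewise function
vanishes on both rays {θ = θ₊} and {θ = θ₋}. -/
theorem stmt3 :
    let γ : ℝ := 4/5
    let θp : ℝ := 3 * Real.pi / 4
    let θm : ℝ := -(Real.pi / 4)
    let A : ℝ := - Real.cos (γ * θp) / Real.sin (γ * θp)
    let a₀ : ℝ := (Real.sin (γ * θp) * Real.cos (γ * θm)) /
      (Real.cos (γ * θp) * Real.sin (γ * θm))
    0 < a₀ ∧
      (∀ r : ℝ, 0 < r → r ^ γ * (A * Real.sin (γ * θp) + Real.cos (γ * θp)) = 0) ∧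
      (∀ r : ℝ, 0 < r → r ^ γ * (a₀ * A * Real.sin (γ * θm) + Real.cos (γ * θm)) = 0) := by
  intro γ θp θm A a₀
  have hπ := Real.pi_pos
  have hp : γ * θp = 3 * Real.pi / 5 := by simp only [γ, θp]; ring
  have hm : γ * θm = -(Real.pi / 5) := by simp only [γ, θm]; ring
  have hsp : 0 < Real.sin (γ * θp) := by
    rw [hp]; exact Real.sin_pos_of_pos_of_lt_pi (by linarith) (by linarith)
  have hcp : Real.cos (γ * θp) < 0 := by
    rw [hp]; exact Real.cos_neg_of_pi_div_two_lt_of_lt (by linarith) (by linarith)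
  have hsm : Real.sin (γ * θm) < 0 := by
    rw [hm, Real.sin_neg, neg_neg_iff_pos]
    exact Real.sin_pos_of_pos_of_lt_pi (by linarith) (by linarith)
  have hcm : 0 < Real.cos (γ * θm) := by
    rw [hm, Real.cos_neg]
    exact Real.cos_pos_of_mem_Ioo ⟨by linarith, by linarith⟩
  refine ⟨div_pos (mul_pos hsp hcm) (mul_pos_of_neg_of_neg hcp hsm), ?_, ?_⟩
  · intro r hr
    have : A * Real.sin (γ * θp) + Real.cos (γ * θp) = 0 := by
      simp only [A]
      set sp := Real.sin (γ * θp)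
      set cp := Real.cos (γ * θp)
      field_simp [hsp.ne', hcp.ne, hsm.ne]
      ring
    rw [this, mul_zero]
  · intro r hr
    have : a₀ * A * Real.sin (γ * θm) + Real.cos (γ * θm) = 0 := by
      simp only [a₀, A]
      set sp := Real.sin (γ * θp)
      set cp := Real.cos (γ * θp)
      set sm := Real.sin (γ * θm)
      set cm := Real.cos (γ * θm)
      field_simp [hsp.ne', hcp.ne, hsm.ne]
      ring
    rw [this, mul_zero]
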